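/- Let V be defined by the recursion V₁ = σ and V_{n+1} = σ + β Σ_{j=1}^{n} K_{n−j} V_j ξ_j for n ≥ 1, with β ≠ 0. Then the following are equivalent: (A) Σ_{n=0}^∞ K_n² < ∞ and β² Σ_{n=0}^∞ K_n² < 1; (B) V is asymptotically weakly stationary, i.e. E[V_n] converges as n → ∞ and for every Δ ≥ 0 the covariance Cov(V_n, V_{n+Δ}) converges to a finite limit as n → ∞. Moreover, both imply E[V_n] = σ for all n, lim_{n→∞} E[V_n²] = σ²/(1 − β² Σ_{n=0}^∞ K_n²), and for every Δ ≥ 0, lim_{n→∞} Cov(V_n, V_{n+Δ}) = β² · (σ²/(1 − β² Σ_{n=0}^∞ K_n²)) · Σ_{j=0}^∞ K_j K_{j+Δ}. -/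

import Mathlib

open MeasureTheory ProbabilityTheory Filter Topology

lemma aux_indep_mono {Ω : Type*} {mΩ : MeasurableSpace Ω} {μ : Measure Ω}
    {m1 m2 m1' m2' : MeasurableSpace Ω} (h : Indep m1 m2 μ) (h1 : m1' ≤ m1) (h2 : m2' ≤ m2) :
    Indep m1' m2' μ := by
  rw [Indep_iff] at h ⊢
  exact fun t1 t2 ht1 ht2 => h t1 t2 (h1 _ ht1) (h2 _ ht2)

lemma aux_integrable_mul_L2 {Ω : Type*} {mΩ : MeasurableSpace Ω} {μ : Measure Ω}
    {f g : Ω → ℝ} (hf : MemLp f 2 μ) (hg : MemLp g 2 μ) :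
    Integrable (fun ω => f ω * g ω) μ := by
  rw [← memLp_one_iff_integrable]
  have h := hf.smul hg (p := 2) (q := 2) (r := 1) (hpqr := ⟨by simpa using ENNReal.inv_two_add_inv_two⟩)
  have : (g • f) = fun ω => f ω * g ω := by funext ω; simp [mul_comm]
  rwa [this] at h

lemma aux_conv_tendsto {a x : ℕ → ℝ} {L C : ℝ}
    (ha : ∀ i, 0 ≤ a i) (hsum : Summable a) (hC0 : 0 ≤ C)
    (hx : Tendsto x atTop (𝓝 L)) (hC : ∀ n, 1 ≤ n → |x n| ≤ C) :
    Tendsto (fun n => ∑ i ∈ Finset.range n, a i * x (n - i)) atTop (𝓝 (L * ∑' i, a i)) := by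
  have key : Tendsto (fun n => ∑' i, (if i < n then a i * x (n - i) else 0)) atTop
      (𝓝 (∑' i, a i * L)) := by
    apply tendsto_tsum_of_dominated_convergence (bound := fun i => a i * C)
    · exact hsum.mul_right C
    · intro k
      have h1 : Tendsto (fun n : ℕ => n - k) atTop atTop := tendsto_sub_atTop_nat k
      have h2 : Tendsto (fun n : ℕ => a k * x (n - k)) atTop (𝓝 (a k * L)) :=
        (hx.comp h1).const_mul _
      apply h2.congr'
      filter_upwards [eventually_gt_atTop k] with n hn
      simp [hn]
    · filter_upwards [] with n
      intro k
      by_cases hk : k < n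
      · simp only [hk, if_true, Real.norm_eq_abs, abs_mul, abs_of_nonneg (ha k)]
        exact mul_le_mul_of_nonneg_left (hC _ (by omega)) (ha k)
      · simp only [hk, if_false, norm_zero]
        exact mul_nonneg (ha k) hC0
  have heq : ∀ n : ℕ, (∑' i, (if i < n then a i * x (n - i) else 0))
      = ∑ i ∈ Finset.range n, a i * x (n - i) := by
    intro n
    rw [tsum_eq_sum (s := Finset.range n) (fun i hi => by
      simp [Finset.mem_range] at hi; simp [hi])]
    exact Finset.sum_congr rfl fun i hi => by simp [Finset.mem_range.mp hi]
  have : (∑' i, a i * L) = L * ∑' i, a i := by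
    rw [tsum_mul_right, mul_comm]
  rw [this] at key
  exact key.congr heq

section
variable {Ω : Type*} [MeasurableSpace Ω] (μ : Measure Ω) [IsProbabilityMeasure μ]
    (ξ : ℕ → Ω → ℝ) (hξmeas : ∀ n, Measurable (ξ n))
    (hindep : iIndepFun ξ μ)
    (hξL2 : ∀ n, MemLp (ξ n) 2 μ)
    (hξmean : ∀ n, ∫ ω, ξ n ω ∂μ = 0)
    (hξvar : ∀ n, ∫ ω, (ξ n ω) ^ 2 ∂μ = 1)
    (σ β : ℝ)
    (K : ℕ → ℝ)
    (V : ℕ → Ω → ℝ)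
    (hV1 : ∀ ω, V 1 ω = σ)
    (hVrec : ∀ n ≥ 1, ∀ ω,
      V (n + 1) ω = σ + β * ∑ j ∈ Finset.Icc 1 n, K (n - j) * (V j ω * ξ j ω))

set_option maxHeartbeats 1000000

example : True := trivial

-- sigma algebra machinery
noncomputable def Gfam (ξ : ℕ → Ω → ℝ) : ℕ → MeasurableSpace Ω :=
  fun k => ⨆ j ∈ Set.Icc 1 k, MeasurableSpace.comap (ξ j) inferInstance

include hξmeas in
lemma hGle : ∀ k, Gfam ξ k ≤ ‹MeasurableSpace Ω› := fun k =>
  iSup₂_le fun j _ => measurable_iff_comap_le.mp (hξmeas j)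

lemma hxiG : ∀ k j, j ∈ Set.Icc 1 k → Measurable[Gfam ξ k] (ξ j) := fun k j hj =>
  measurable_iff_comap_le.mpr
    (le_biSup (f := fun j => MeasurableSpace.comap (ξ j) inferInstance) hj)

include hξmeas hindep in
lemma hIndepG : ∀ k (f : Ω → ℝ), Measurable[Gfam ξ k] f → ∀ m, m ∉ Set.Icc 1 k →
    IndepFun f (ξ m) μ := by
  intro k f hf m hm
  have h := indep_iSup_of_disjoint (μ := μ)
      (m := fun j => MeasurableSpace.comap (ξ j) inferInstance)
      (fun j => measurable_iff_comap_le.mp (hξmeas j)) hindep.iIndep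
      (S := Set.Icc 1 k) (T := {m}) (by simpa [Set.disjoint_singleton_right] using hm)
  have h2 : Indep (Gfam ξ k) (MeasurableSpace.comap (ξ m) inferInstance) μ := by
    simpa [Gfam] using h
  rw [IndepFun_iff_Indep]
  exact aux_indep_mono h2 (measurable_iff_comap_le.mp hf) le_rfl

include hξmeas hV1 hVrec in
lemma hVmeasG : ∀ n, 1 ≤ n → ∀ k, n ≤ k + 1 → Measurable[Gfam ξ k] (V n) := by
  intro n
  induction n using Nat.strong_induction_on with
  | _ n ih =>
    intro hn k hk
    match n, hn with
    | 1, _ =>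
      have h : V 1 = fun _ => (σ : ℝ) := funext hV1
      rw [h]; exact measurable_const
    | (m+2), _ =>
      have h : V (m+2) = fun ω =>
          σ + β * ∑ j ∈ Finset.Icc 1 (m+1), K (m+1-j) * (V j ω * ξ j ω) :=
        funext (hVrec (m+1) (by omega))
      rw [h]
      refine measurable_const.add (Measurable.const_mul ?_ β)
      refine Finset.measurable_sum _ fun j hj => ?_
      have hj' := Finset.mem_Icc.mp hj
      exact Measurable.const_mul
        ((ih j (by omega) hj'.1 k (by omega)).mul
          (hxiG ξ k j (Set.mem_Icc.mpr ⟨hj'.1, by omega⟩))) _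

include hξmeas hV1 hVrec in
lemma hVmeas : ∀ n, 1 ≤ n → Measurable (V n) := fun n hn =>
  (hVmeasG ξ hξmeas σ β K V hV1 hVrec n hn n (by omega)).mono (hGle ξ hξmeas n) le_rfl

include hξmeas hindep hV1 hVrec in
lemma hVxiIndep : ∀ n, 1 ≤ n → IndepFun (V n) (ξ n) μ := by
  intro n hn
  refine hIndepG μ ξ hξmeas hindep (n-1) (V n)
    (hVmeasG ξ hξmeas σ β K V hV1 hVrec n hn (n-1) (by omega)) n ?_
  simp only [Set.mem_Icc]; omega

include hξmeas hindep hξL2 hV1 hVrec in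
lemma hVL2 : ∀ n, 1 ≤ n → MemLp (V n) 2 μ := by
  have hVm := hVmeas ξ hξmeas σ β K V hV1 hVrec
  intro n
  induction n using Nat.strong_induction_on with
  | _ n ih =>
    intro hn
    match n, hn with
    | 1, _ =>
      have h : V 1 = fun _ => (σ : ℝ) := funext hV1
      rw [h]; exact memLp_const σ
    | (m+2), _ =>
      have h : V (m+2) = fun ω =>
          σ + β * ∑ j ∈ Finset.Icc 1 (m+1), K (m+1-j) * (V j ω * ξ j ω) :=
        funext (hVrec (m+1) (by omega))
      rw [h]
      refine (memLp_const (σ:ℝ)).add ?_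
      have hsum : MemLp (fun ω => ∑ j ∈ Finset.Icc 1 (m+1),
          K (m+1-j) * (V j ω * ξ j ω)) 2 μ := by
        refine memLp_finset_sum _ fun j hj => ?_
        have hj' := Finset.mem_Icc.mp hj
        have hj1 : 1 ≤ j := hj'.1
        -- MemLp (V j * ξ j) 2
        have hVj2 : MemLp (V j) 2 μ := ih j (by omega) hj1
        have hasm : AEStronglyMeasurable (fun ω => V j ω * ξ j ω) μ :=
          ((hVm j hj1).mul (hξmeas j)).aestronglyMeasurable
        have hprod : MemLp (fun ω => V j ω * ξ j ω) 2 μ := by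
          rw [memLp_two_iff_integrable_sq hasm]
          have hind2 : IndepFun (fun ω => (V j ω)^2) (fun ω => (ξ j ω)^2) μ :=
            (hVxiIndep μ ξ hξmeas hindep σ β K V hV1 hVrec j hj1).comp
              (measurable_id.pow_const 2) (measurable_id.pow_const 2)
          have hintV : Integrable (fun ω => (V j ω)^2) μ :=
            (memLp_two_iff_integrable_sq (hVm j hj1).aestronglyMeasurable).mp hVj2
          have hintξ : Integrable (fun ω => (ξ j ω)^2) μ :=
            (memLp_two_iff_integrable_sq (hξmeas j).aestronglyMeasurable).mp (hξL2 j)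
          have := hind2.integrable_mul hintV hintξ
          have heq : ((fun ω => (V j ω)^2) * fun ω => (ξ j ω)^2)
              = fun ω => (V j ω * ξ j ω)^2 := by funext ω; simp [Pi.mul_apply]; ring
          rwa [heq] at this
        exact hprod.const_mul _
      exact hsum.const_mul β

include hξmeas hindep hξL2 hV1 hVrec in
lemma hWL2 : ∀ j, 1 ≤ j → MemLp (fun ω => V j ω * ξ j ω) 2 μ := by
  intro j hj1
  have hVm := hVmeas ξ hξmeas σ β K V hV1 hVrec
  have hasm : AEStronglyMeasurable (fun ω => V j ω * ξ j ω) μ :=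
    ((hVm j hj1).mul (hξmeas j)).aestronglyMeasurable
  rw [memLp_two_iff_integrable_sq hasm]
  have hind2 : IndepFun (fun ω => (V j ω)^2) (fun ω => (ξ j ω)^2) μ :=
    (hVxiIndep μ ξ hξmeas hindep σ β K V hV1 hVrec j hj1).comp
      (measurable_id.pow_const 2) (measurable_id.pow_const 2)
  have hintV : Integrable (fun ω => (V j ω)^2) μ :=
    (memLp_two_iff_integrable_sq (hVm j hj1).aestronglyMeasurable).mp
      (hVL2 μ ξ hξmeas hindep hξL2 σ β K V hV1 hVrec j hj1)
  have hintξ : Integrable (fun ω => (ξ j ω)^2) μ :=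
    (memLp_two_iff_integrable_sq (hξmeas j).aestronglyMeasurable).mp (hξL2 j)
  have h := hind2.integrable_mul hintV hintξ
  have heq : ((fun ω => (V j ω)^2) * fun ω => (ξ j ω)^2)
      = fun ω => (V j ω * ξ j ω)^2 := by funext ω; simp [Pi.mul_apply]; ring
  rwa [heq] at h

include hξmeas hindep hξL2 hV1 hVrec in
lemma hWint : ∀ j, 1 ≤ j → Integrable (fun ω => V j ω * ξ j ω) μ := fun j hj =>
  (hWL2 μ ξ hξmeas hindep hξL2 σ β K V hV1 hVrec j hj).integrable one_le_two

include hξmeas hindep hξmean hV1 hVrec in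
lemma hWmean : ∀ j, 1 ≤ j → ∫ ω, V j ω * ξ j ω ∂μ = 0 := by
  intro j hj
  have hVm := hVmeas ξ hξmeas σ β K V hV1 hVrec
  rw [(hVxiIndep μ ξ hξmeas hindep σ β K V hV1 hVrec j hj).integral_fun_mul_eq_mul_integral
    (hVm j hj).aestronglyMeasurable (hξmeas j).aestronglyMeasurable, hξmean j, mul_zero]

include hξmeas hindep hξL2 hξmean hV1 hVrec in
lemma hVmean : ∀ n, 1 ≤ n → ∫ ω, V n ω ∂μ = σ := by
  intro n hn
  match n, hn with
  | 1, _ =>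
    have h : V 1 = fun _ => (σ : ℝ) := funext hV1
    rw [h]; simp
  | (m+2), _ =>
    have h : V (m+2) = fun ω =>
        σ + β * ∑ j ∈ Finset.Icc 1 (m+1), K (m+1-j) * (V j ω * ξ j ω) :=
      funext (hVrec (m+1) (by omega))
    rw [h]
    have hint : Integrable (fun ω =>
        ∑ j ∈ Finset.Icc 1 (m+1), K (m+1-j) * (V j ω * ξ j ω)) μ :=
      integrable_finset_sum _ fun j hj =>
        ((hWint μ ξ hξmeas hindep hξL2 σ β K V hV1 hVrec j
          (Finset.mem_Icc.mp hj).1).const_mul _)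
    rw [integral_add (integrable_const σ) (hint.const_mul β), integral_const,
      integral_const_mul _ _, integral_finset_sum _ fun j hj =>
        ((hWint μ ξ hξmeas hindep hξL2 σ β K V hV1 hVrec j
          (Finset.mem_Icc.mp hj).1).const_mul _)]
    have hz : ∀ j ∈ Finset.Icc 1 (m+1),
        ∫ ω, K (m+1-j) * (V j ω * ξ j ω) ∂μ = 0 := by
      intro j hj
      rw [integral_const_mul _ _,
        hWmean μ ξ hξmeas hindep hξmean σ β K V hV1 hVrec j (Finset.mem_Icc.mp hj).1,
        mul_zero]
    rw [Finset.sum_eq_zero hz]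
    simp

include hξmeas hindep hξmean hξvar hV1 hVrec in
lemma hWW : ∀ j k, 1 ≤ j → 1 ≤ k →
    ∫ ω, (V j ω * ξ j ω) * (V k ω * ξ k ω) ∂μ
      = if j = k then ∫ ω, (V j ω)^2 ∂μ else 0 := by
  have hVm := hVmeas ξ hξmeas σ β K V hV1 hVrec
  have hVG := hVmeasG ξ hξmeas σ β K V hV1 hVrec
  have key : ∀ j k, 1 ≤ j → j < k →
      ∫ ω, (V j ω * ξ j ω) * (V k ω * ξ k ω) ∂μ = 0 := by
    intro j k hj hjk
    set X : Ω → ℝ := fun ω => V j ω * ξ j ω * V k ω with hX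
    have hXG : Measurable[Gfam ξ (k-1)] X := by
      refine ((hVG j hj (k-1) (by omega)).mul
        (hxiG ξ (k-1) j (Set.mem_Icc.mpr ⟨hj, by omega⟩))).mul
        (hVG k (by omega) (k-1) (by omega))
    have hXind : IndepFun X (ξ k) μ :=
      hIndepG μ ξ hξmeas hindep (k-1) X hXG k (by simp only [Set.mem_Icc]; omega)
    have hXasm : AEStronglyMeasurable X μ :=
      (((hVm j hj).mul (hξmeas j)).mul (hVm k (by omega))).aestronglyMeasurable
    have heq : (fun ω => (V j ω * ξ j ω) * (V k ω * ξ k ω))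
        = fun ω => X ω * ξ k ω := by funext ω; simp only [hX]; ring
    rw [heq, hXind.integral_fun_mul_eq_mul_integral hXasm (hξmeas k).aestronglyMeasurable, hξmean k,
      mul_zero]
  intro j k hj hk
  rcases lt_trichotomy j k with h | h | h
  · rw [if_neg (by omega), key j k hj h]
  · subst h
    rw [if_pos rfl]
    have heq : (fun ω => (V j ω * ξ j ω) * (V j ω * ξ j ω))
        = fun ω => (V j ω)^2 * (ξ j ω)^2 := by funext ω; ring
    have hind2 : IndepFun (fun ω => (V j ω)^2) (fun ω => (ξ j ω)^2) μ :=
      (hVxiIndep μ ξ hξmeas hindep σ β K V hV1 hVrec j hj).comp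
        (measurable_id.pow_const 2) (measurable_id.pow_const 2)
    rw [heq, hind2.integral_fun_mul_eq_mul_integral ((hVm j hj).pow_const 2).aestronglyMeasurable
      ((hξmeas j).pow_const 2).aestronglyMeasurable, hξvar j, mul_one]
  · have heq : (fun ω => (V j ω * ξ j ω) * (V k ω * ξ k ω))
        = fun ω => (V k ω * ξ k ω) * (V j ω * ξ j ω) := by
      funext ω; ring
    rw [if_neg (by omega), heq, key k j hk h]

include hξmeas hindep hξL2 hξmean hξvar hV1 hVrec in
lemma hsec : ∀ n, 1 ≤ n → ∀ Δ : ℕ,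
    ∫ ω, V (n+1) ω * V (n+1+Δ) ω ∂μ
      = σ^2 + β^2 * ∑ j ∈ Finset.Icc 1 n,
          (K (n-j) * K (n+Δ-j)) * ∫ ω, (V j ω)^2 ∂μ := by
  intro n hn Δ
  have hW2 := hWL2 μ ξ hξmeas hindep hξL2 σ β K V hV1 hVrec
  have hWi := hWint μ ξ hξmeas hindep hξL2 σ β K V hV1 hVrec
  have hWm := hWmean μ ξ hξmeas hindep hξmean σ β K V hV1 hVrec
  set A : Ω → ℝ := fun ω => ∑ j ∈ Finset.Icc 1 n, K (n-j) * (V j ω * ξ j ω) with hA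
  set B : Ω → ℝ := fun ω => ∑ j ∈ Finset.Icc 1 (n+Δ), K (n+Δ-j) * (V j ω * ξ j ω) with hB
  have hpt : (fun ω => V (n+1) ω * V (n+1+Δ) ω)
      = fun ω => σ^2 + ((σ*β) * B ω + ((β*σ) * A ω + (β*β) * (A ω * B ω))) := by
    funext ω
    have e1 := hVrec n hn ω
    have e2 := hVrec (n+Δ) (by omega) ω
    have e3 : n+1+Δ = (n+Δ)+1 := by omega
    rw [e3, e1, e2, hA, hB]
    ring
  have hIntA : Integrable A μ :=
    integrable_finset_sum _ fun j hj => (hWi j (Finset.mem_Icc.mp hj).1).const_mul _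
  have hIntB : Integrable B μ :=
    integrable_finset_sum _ fun j hj => (hWi j (Finset.mem_Icc.mp hj).1).const_mul _
  have hexp : (fun ω => A ω * B ω) = fun ω => ∑ j ∈ Finset.Icc 1 n,
      ∑ k ∈ Finset.Icc 1 (n+Δ),
        (K (n-j) * K (n+Δ-k)) * ((V j ω * ξ j ω) * (V k ω * ξ k ω)) := by
    funext ω
    rw [hA, hB, Finset.sum_mul_sum]
    exact Finset.sum_congr rfl fun j _ => Finset.sum_congr rfl fun k _ => by ring
  have hIntTerm : ∀ j ∈ Finset.Icc 1 n, ∀ k ∈ Finset.Icc 1 (n+Δ),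
      Integrable (fun ω =>
        (K (n-j) * K (n+Δ-k)) * ((V j ω * ξ j ω) * (V k ω * ξ k ω))) μ :=
    fun j hj k hk =>
      (aux_integrable_mul_L2 (hW2 j (Finset.mem_Icc.mp hj).1)
        (hW2 k (Finset.mem_Icc.mp hk).1)).const_mul _
  have hIntAB : Integrable (fun ω => A ω * B ω) μ := by
    rw [hexp]
    exact integrable_finset_sum _ fun j hj =>
      integrable_finset_sum _ fun k hk => hIntTerm j hj k hk
  have hA0 : ∫ ω, A ω ∂μ = 0 := by
    rw [hA, integral_finset_sum _ fun j hj =>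
      (hWi j (Finset.mem_Icc.mp hj).1).const_mul _]
    refine Finset.sum_eq_zero fun j hj => ?_
    rw [integral_const_mul _ _, hWm j (Finset.mem_Icc.mp hj).1, mul_zero]
  have hB0 : ∫ ω, B ω ∂μ = 0 := by
    rw [hB, integral_finset_sum _ fun j hj =>
      (hWi j (Finset.mem_Icc.mp hj).1).const_mul _]
    refine Finset.sum_eq_zero fun j hj => ?_
    rw [integral_const_mul _ _, hWm j (Finset.mem_Icc.mp hj).1, mul_zero]
  have hAB : ∫ ω, A ω * B ω ∂μ = ∑ j ∈ Finset.Icc 1 n,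
      (K (n-j) * K (n+Δ-j)) * ∫ ω, (V j ω)^2 ∂μ := by
    rw [hexp, integral_finset_sum _ fun j hj =>
      integrable_finset_sum _ fun k hk => hIntTerm j hj k hk]
    refine Finset.sum_congr rfl fun j hj => ?_
    rw [integral_finset_sum _ fun k hk => hIntTerm j hj k hk]
    have hj' := Finset.mem_Icc.mp hj
    have hstep : ∀ k ∈ Finset.Icc 1 (n+Δ),
        ∫ ω, (K (n-j) * K (n+Δ-k)) * ((V j ω * ξ j ω) * (V k ω * ξ k ω)) ∂μ
          = if j = k then (K (n-j) * K (n+Δ-k)) * ∫ ω, (V j ω)^2 ∂μ else 0 := by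
      intro k hk
      rw [integral_const_mul _ _,
        hWW μ ξ hξmeas hindep hξmean hξvar σ β K V hV1 hVrec j k hj'.1
          (Finset.mem_Icc.mp hk).1]
      by_cases h : j = k
      · simp [h]
      · simp [h]
    rw [Finset.sum_congr rfl hstep, Finset.sum_ite_eq (Finset.Icc 1 (n+Δ)) j
      (fun k => (K (n-j) * K (n+Δ-k)) * ∫ ω, (V j ω)^2 ∂μ)]
    rw [if_pos (Finset.mem_Icc.mpr ⟨hj'.1, by omega⟩)]
  calc ∫ ω, V (n+1) ω * V (n+1+Δ) ω ∂μ
      = ∫ ω, (σ^2 + ((σ*β) * B ω + ((β*σ) * A ω + (β*β) * (A ω * B ω)))) ∂μ := by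
        rw [hpt]
    _ = σ^2 + ((σ*β) * ∫ ω, B ω ∂μ + ((β*σ) * ∫ ω, A ω ∂μ
          + (β*β) * ∫ ω, A ω * B ω ∂μ)) := by
        have i1 : Integrable (fun ω => (β*β) * (A ω * B ω)) μ := hIntAB.const_mul _
        have i2 : Integrable (fun ω => (β*σ) * A ω) μ := hIntA.const_mul _
        have i3 : Integrable (fun ω => (σ*β) * B ω) μ := hIntB.const_mul _
        have i23 : Integrable (fun ω => (β*σ) * A ω + (β*β) * (A ω * B ω)) μ := i2.add i1
        have i123 : Integrable (fun ω => (σ*β) * B ω + ((β*σ) * A ω + (β*β) * (A ω * B ω))) μ :=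
          i3.add i23
        rw [integral_add (integrable_const _) i123, integral_add i3 i23,
          integral_add i2 i1,
          integral_const_mul _ _, integral_const_mul _ _, integral_const_mul _ _]
        simp
    _ = σ^2 + β^2 * ∑ j ∈ Finset.Icc 1 n,
          (K (n-j) * K (n+Δ-j)) * ∫ ω, (V j ω)^2 ∂μ := by
        rw [hA0, hB0, hAB]; ring
lemma det_forward {a : ℕ → ℝ} {c : ℝ} (hc : 0 < c) (ha : ∀ i, 0 ≤ a i)
    (hsum : Summable a) (hs1 : ∑' i, a i < 1)
    {m : ℕ → ℝ} (hm0 : ∀ n, 0 ≤ m n) (hm1 : m 1 = c)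
    (hrec : ∀ n, 1 ≤ n → m (n+1) = c + ∑ i ∈ Finset.range n, a i * m (n-i)) :
    Tendsto m atTop (𝓝 (c / (1 - ∑' i, a i)))
      ∧ ∀ n, 1 ≤ n → m n ≤ c / (1 - ∑' i, a i) := by
  set s := ∑' i, a i with hs
  have hs0 : 0 ≤ s := tsum_nonneg ha
  have h1s : 0 < 1 - s := by linarith
  set B := c / (1 - s) with hB
  have hBc : B * (1 - s) = c := div_mul_cancel₀ c (ne_of_gt h1s)
  have hBpos : 0 < B := div_pos hc h1s
  have hcleB : c ≤ B := by
    rw [hB, le_div_iff₀ h1s]; nlinarith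
  have hpart : ∀ n, ∑ i ∈ Finset.range n, a i ≤ s :=
    fun n => Summable.sum_le_tsum _ (fun i _ => ha i) hsum
  have hbd : ∀ n, 1 ≤ n → m n ≤ B := by
    intro n
    induction n using Nat.strong_induction_on with
    | _ n ih =>
      intro hn
      match n, hn with
      | 1, _ => rw [hm1]; exact hcleB
      | (p+2), _ =>
        rw [hrec (p+1) (by omega)]
        have h1 : ∑ i ∈ Finset.range (p+1), a i * m (p+1-i)
            ≤ ∑ i ∈ Finset.range (p+1), a i * B := by
          refine Finset.sum_le_sum fun i hi => ?_
          have hi' := Finset.mem_range.mp hi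
          exact mul_le_mul_of_nonneg_left
            (ih (p+1-i) (by omega) (by omega)) (ha i)
        have h2 : ∑ i ∈ Finset.range (p+1), a i * B ≤ s * B := by
          rw [← Finset.sum_mul]
          exact mul_le_mul_of_nonneg_right (hpart _) hBpos.le
        nlinarith
  have hmono : ∀ n, 1 ≤ n → m n ≤ m (n+1) := by
    intro n
    induction n using Nat.strong_induction_on with
    | _ n ih =>
      intro hn
      match n, hn with
      | 1, _ =>
        rw [hrec 1 le_rfl, hm1, Finset.sum_range_one]
        have := mul_nonneg (ha 0) (hm0 1)
        simp only [Nat.sub_zero]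
        nlinarith
      | (p+2), _ =>
        rw [hrec (p+2) (by omega), hrec (p+1) (by omega),
          Finset.sum_range_succ (fun i => a i * m (p+2-i)) (p+1)]
        have h1 : ∑ i ∈ Finset.range (p+1), a i * m (p+1-i)
            ≤ ∑ i ∈ Finset.range (p+1), a i * m (p+2-i) := by
          refine Finset.sum_le_sum fun i hi => ?_
          have hi' := Finset.mem_range.mp hi
          have he : p+2-i = (p+1-i)+1 := by omega
          rw [he]
          exact mul_le_mul_of_nonneg_left (ih (p+1-i) (by omega) (by omega)) (ha i)
        have h2 : 0 ≤ a (p+1) * m (p+2-(p+1)) := mul_nonneg (ha _) (hm0 _)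
        linarith
  have hmono' : Monotone (fun k => m (k+1)) :=
    monotone_nat_of_le_succ fun k => hmono (k+1) (by omega)
  have hbdd : BddAbove (Set.range fun k => m (k+1)) := by
    refine ⟨B, ?_⟩
    rintro x ⟨k, rfl⟩
    exact hbd (k+1) (by omega)
  have htend' : Tendsto (fun k => m (k+1)) atTop (𝓝 (⨆ k, m (k+1))) :=
    tendsto_atTop_ciSup hmono' hbdd
  set M := ⨆ k, m (k+1) with hM
  have htm : Tendsto m atTop (𝓝 M) := (tendsto_add_atTop_iff_nat 1).mp htend'
  have hMB : M ≤ B := ciSup_le fun k => hbd (k+1) (by omega)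
  have hMc : c ≤ M := by
    have := le_ciSup hbdd 0
    simpa [hm1] using this
  have hconv : Tendsto (fun n => ∑ i ∈ Finset.range n, a i * m (n-i)) atTop
      (𝓝 (M * s)) :=
    aux_conv_tendsto ha hsum hBpos.le htm
      (fun n hn => by rw [abs_of_nonneg (hm0 n)]; exact hbd n hn)
  have htend2 : Tendsto (fun n => m (n+1)) atTop (𝓝 (c + M * s)) := by
    refine Tendsto.congr' ?_ ((tendsto_const_nhds (x := c)).add hconv)
    filter_upwards [eventually_ge_atTop 1] with n hn
    exact (hrec n hn).symm
  have hMeq : M = c + M * s := tendsto_nhds_unique htend' htend2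
  have hMB' : M = B := by
    rw [hB]
    field_simp
    linarith [hMeq]
  rw [← hMB']
  exact ⟨htm, fun n hn => hMB' ▸ hbd n hn⟩

lemma det_backward {a : ℕ → ℝ} {c M : ℝ} (hc : 0 < c) (ha : ∀ i, 0 ≤ a i)
    {m : ℕ → ℝ} (hm0 : ∀ n, 0 ≤ m n) (hm1 : m 1 = c)
    (hmge : ∀ n, 1 ≤ n → c ≤ m n)
    (hrec : ∀ n, 1 ≤ n → m (n+1) = c + ∑ i ∈ Finset.range n, a i * m (n-i))
    (htm : Tendsto m atTop (𝓝 M)) :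
    Summable a ∧ ∑' i, a i < 1 := by
  obtain ⟨C, hC⟩ := htm.bddAbove_range
  have hC' : ∀ n, m n ≤ C := fun n => hC ⟨n, rfl⟩
  have hcC : c ≤ C := hm1 ▸ hC' 1
  have hbound : ∀ n, ∑ i ∈ Finset.range n, a i ≤ (C - c) / c := by
    intro n
    rcases Nat.eq_zero_or_pos n with rfl | hn
    · simp only [Finset.range_zero, Finset.sum_empty]
      exact div_nonneg (by linarith) hc.le
    · have h1 : c + ∑ i ∈ Finset.range n, a i * c ≤ m (n+1) := by
        rw [hrec n hn]
        have : ∑ i ∈ Finset.range n, a i * c ≤ ∑ i ∈ Finset.range n, a i * m (n-i) :=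
          Finset.sum_le_sum fun i hi =>
            mul_le_mul_of_nonneg_left
              (hmge (n-i) (by have hi' := Finset.mem_range.mp hi; omega)) (ha i)
        linarith
      rw [← Finset.sum_mul] at h1
      have h2 : (∑ i ∈ Finset.range n, a i) * c ≤ C - c := by
        have := hC' (n+1); linarith
      rw [le_div_iff₀ hc]
      exact h2
  have hsum : Summable a := summable_of_sum_range_le ha hbound
  set s := ∑' i, a i with hs
  have hs0 : 0 ≤ s := tsum_nonneg ha
  have hMc : c ≤ M := by
    refine ge_of_tendsto htm ?_
    filter_upwards [eventually_ge_atTop 1] with n hn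
    exact hmge n hn
  have hC0 : 0 ≤ C := le_trans (le_trans hc.le hcC) le_rfl
  have hconv : Tendsto (fun n => ∑ i ∈ Finset.range n, a i * m (n-i)) atTop
      (𝓝 (M * s)) :=
    aux_conv_tendsto ha hsum hC0 htm
      (fun n _ => by rw [abs_of_nonneg (hm0 n)]; exact hC' n)
  have htend2 : Tendsto (fun n => m (n+1)) atTop (𝓝 (c + M * s)) := by
    refine Tendsto.congr' ?_ ((tendsto_const_nhds (x := c)).add hconv)
    filter_upwards [eventually_ge_atTop 1] with n hn
    exact (hrec n hn).symm
  have htend1 : Tendsto (fun n => m (n+1)) atTop (𝓝 M) :=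
    (tendsto_add_atTop_iff_nat 1).mpr htm
  have hMeq : M = c + M * s := tendsto_nhds_unique htend1 htend2
  refine ⟨hsum, ?_⟩
  nlinarith

include hξmeas hindep hξL2 hξmean hξvar hV1 hVrec in
lemma hrecDelta : ∀ n, 1 ≤ n → ∀ Δ : ℕ,
    ∫ ω, V (n+1) ω * V (n+1+Δ) ω ∂μ
      = σ^2 + ∑ i ∈ Finset.range n,
          (β^2 * (K i * K (i+Δ))) * ∫ ω, (V (n-i) ω)^2 ∂μ := by
  intro n hn Δ
  rw [hsec μ ξ hξmeas hindep hξL2 hξmean hξvar σ β K V hV1 hVrec n hn Δ]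
  congr 1
  rw [Finset.mul_sum]
  refine Finset.sum_nbij' (i := fun j => n - j) (j := fun i => n - i)
    ?_ ?_ ?_ ?_ ?_
  · intro j hj
    have hj' := Finset.mem_Icc.mp hj
    simp only [Finset.mem_range]
    omega
  · intro i hi
    have hi' := Finset.mem_range.mp hi
    simp only [Finset.mem_Icc]
    omega
  · intro j hj
    have hj' := Finset.mem_Icc.mp hj
    show n - (n - j) = j
    omega
  · intro i hi
    have hi' := Finset.mem_range.mp hi
    show n - (n - i) = i
    omega
  · intro j hj
    have hj' := Finset.mem_Icc.mp hj
    show _ = (β^2 * (K (n-j) * K ((n-j)+Δ))) * ∫ ω, (V (n-(n-j)) ω)^2 ∂μ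
    have e1 : n - (n - j) = j := by omega
    have e2 : (n - j) + Δ = n + Δ - j := by omega
    rw [e1, e2]
    ring

end

set_option maxHeartbeats 2000000

/-- Discrete-time analogue of Theorem 5.3 (end of Section 7): for the volatility recursion
`V₁ = σ`, `V_{n+1} = σ + β ∑_{j=1}^n K_{n−j} V_j ξ_j` with `β ≠ 0`, the conditions
`∑ K_n² < ∞` and `β² ∑ K_n² < 1` together are equivalent to asymptotic weak stationarity
of `V`; moreover they imply `E[V_n] = σ`,
`E[V_n²] → σ²/(1 − β² ∑ K_n²)` and
`Cov(V_n, V_{n+Δ}) → β² (σ²/(1 − β² ∑ K_n²)) ∑_j K_j K_{j+Δ}`. -/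
theorem blackScholesLongMemory_discrete_stationarity
    {Ω : Type*} [MeasurableSpace Ω] (μ : Measure Ω) [IsProbabilityMeasure μ]
    (ξ : ℕ → Ω → ℝ) (hξmeas : ∀ n, Measurable (ξ n))
    (hindep : iIndepFun ξ μ)
    (hid : ∀ n m, IdentDistrib (ξ n) (ξ m) μ μ)
    (hξL2 : ∀ n, MemLp (ξ n) 2 μ)
    (hξmean : ∀ n, ∫ ω, ξ n ω ∂μ = 0)
    (hξvar : ∀ n, ∫ ω, (ξ n ω) ^ 2 ∂μ = 1)
    (σ β : ℝ) (hσ : 0 < σ) (hβ : β ≠ 0)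
    (K : ℕ → ℝ) (hK : ∀ n, 0 ≤ K n)
    (V : ℕ → Ω → ℝ)
    (hV1 : ∀ ω, V 1 ω = σ)
    (hVrec : ∀ n ≥ 1, ∀ ω,
      V (n + 1) ω = σ + β * ∑ j ∈ Finset.Icc 1 n, K (n - j) * (V j ω * ξ j ω)) :
    ((Summable (fun n => K n ^ 2) ∧ β ^ 2 * ∑' n : ℕ, K n ^ 2 < 1) ↔
      ((∃ θ : ℝ, Tendsto (fun n => ∫ ω, V n ω ∂μ) atTop (nhds θ)) ∧
        ∀ Δ : ℕ, ∃ g : ℝ, Tendsto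
          (fun n => (∫ ω, V n ω * V (n + Δ) ω ∂μ) -
            (∫ ω, V n ω ∂μ) * ∫ ω, V (n + Δ) ω ∂μ) atTop (nhds g))) ∧
    ((Summable (fun n => K n ^ 2) ∧ β ^ 2 * ∑' n : ℕ, K n ^ 2 < 1) →
      (∀ n ≥ 1, ∫ ω, V n ω ∂μ = σ) ∧
      Tendsto (fun n => ∫ ω, (V n ω) ^ 2 ∂μ) atTop
        (nhds (σ ^ 2 / (1 - β ^ 2 * ∑' n : ℕ, K n ^ 2))) ∧
      ∀ Δ : ℕ, Tendsto
        (fun n => (∫ ω, V n ω * V (n + Δ) ω ∂μ) -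
          (∫ ω, V n ω ∂μ) * ∫ ω, V (n + Δ) ω ∂μ) atTop
        (nhds (β ^ 2 * (σ ^ 2 / (1 - β ^ 2 * ∑' n : ℕ, K n ^ 2)) *
          ∑' j : ℕ, K j * K (j + Δ)))) := by
  
  classical
  have hmean := hVmean μ ξ hξmeas hindep hξL2 hξmean σ β K V hV1 hVrec
  have hrecD := hrecDelta μ ξ hξmeas hindep hξL2 hξmean hξvar σ β K V hV1 hVrec
  have hm0 : ∀ n : ℕ, 0 ≤ ∫ ω, (V n ω)^2 ∂μ :=
    fun n => integral_nonneg fun ω => sq_nonneg _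
  have hm1 : ∫ ω, (V 1 ω)^2 ∂μ = σ^2 := by
    have h : (fun ω => (V 1 ω)^2) = fun _ => σ^2 := funext fun ω => by rw [hV1]
    rw [h, integral_const]
    simp
  -- the Δ = 0 recursion in convolution form
  have hrec0 : ∀ n, 1 ≤ n → ∫ ω, (V (n+1) ω)^2 ∂μ
      = σ^2 + ∑ i ∈ Finset.range n,
          (β^2 * K i ^ 2) * ∫ ω, (V (n-i) ω)^2 ∂μ := by
    intro n hn
    have h := hrecD n hn 0
    have hL : ∫ ω, (V (n+1) ω)^2 ∂μ = ∫ ω, V (n+1) ω * V (n+1+0) ω ∂μ := by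
      congr 1
      funext ω
      rw [Nat.add_zero, pow_two]
    rw [hL, h]
    congr 1
    refine Finset.sum_congr rfl fun i hi => ?_
    rw [Nat.add_zero]
    ring
  have hmge : ∀ n, 1 ≤ n → σ^2 ≤ ∫ ω, (V n ω)^2 ∂μ := by
    intro n hn
    match n, hn with
    | 1, _ => rw [hm1]
    | (p+2), _ =>
      have h : ∫ ω, (V (p+2) ω)^2 ∂μ = σ^2 + ∑ i ∈ Finset.range (p+1),
          (β^2 * K i ^ 2) * ∫ ω, (V (p+1-i) ω)^2 ∂μ := hrec0 (p+1) (by omega)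
      rw [h]
      have hpos : 0 ≤ ∑ i ∈ Finset.range (p+1),
          (β^2 * K i ^ 2) * ∫ ω, (V (p+1-i) ω)^2 ∂μ :=
        Finset.sum_nonneg fun i _ =>
          mul_nonneg (mul_nonneg (sq_nonneg β) (sq_nonneg _)) (hm0 _)
      linarith
  -- main implication
  have himpl : (Summable (fun n => K n ^ 2) ∧ β ^ 2 * ∑' n : ℕ, K n ^ 2 < 1) →
      ((∀ n ≥ 1, ∫ ω, V n ω ∂μ = σ) ∧
      Tendsto (fun n => ∫ ω, (V n ω) ^ 2 ∂μ) atTop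
        (nhds (σ ^ 2 / (1 - β ^ 2 * ∑' n : ℕ, K n ^ 2))) ∧
      ∀ Δ : ℕ, Tendsto
        (fun n => (∫ ω, V n ω * V (n + Δ) ω ∂μ) -
          (∫ ω, V n ω ∂μ) * ∫ ω, V (n + Δ) ω ∂μ) atTop
        (nhds (β ^ 2 * (σ ^ 2 / (1 - β ^ 2 * ∑' n : ℕ, K n ^ 2)) *
          ∑' j : ℕ, K j * K (j + Δ)))) := by
    rintro ⟨hKsum, hs1⟩
    have ha : ∀ i, 0 ≤ β^2 * K i ^ 2 :=
      fun i => mul_nonneg (sq_nonneg β) (sq_nonneg _)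
    have hasum : Summable (fun i => β^2 * K i ^ 2) := hKsum.mul_left _
    have hatsum : ∑' i, β^2 * K i ^ 2 = β^2 * ∑' n, K n ^ 2 := tsum_mul_left
    have has1 : ∑' i, β^2 * K i ^ 2 < 1 := by rw [hatsum]; exact hs1
    have hdf := det_forward (a := fun i => β^2 * K i ^ 2) (c := σ^2)
      (by positivity) ha hasum has1
      (m := fun k => ∫ ω, (V k ω)^2 ∂μ) hm0 hm1 hrec0
    have hBeq : σ^2 / (1 - ∑' i, β^2 * K i ^ 2)
        = σ ^ 2 / (1 - β ^ 2 * ∑' n : ℕ, K n ^ 2) := by rw [hatsum]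
    have htm : Tendsto (fun k => ∫ ω, (V k ω)^2 ∂μ) atTop
        (nhds (σ ^ 2 / (1 - β ^ 2 * ∑' n : ℕ, K n ^ 2))) := hBeq ▸ hdf.1
    have hbd : ∀ n, 1 ≤ n → ∫ ω, (V n ω)^2 ∂μ
        ≤ σ ^ 2 / (1 - β ^ 2 * ∑' n : ℕ, K n ^ 2) := fun n hn => hBeq ▸ hdf.2 n hn
    refine ⟨hmean, htm, fun Δ => ?_⟩
    set b : ℕ → ℝ := fun i => β^2 * (K i * K (i+Δ)) with hbdef
    have hb : ∀ i, 0 ≤ b i :=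
      fun i => mul_nonneg (sq_nonneg β) (mul_nonneg (hK i) (hK _))
    have hbsum : Summable b := by
      refine Summable.of_nonneg_of_le hb
        (f := fun i => β^2/2 * (K i ^ 2 + K (i+Δ) ^ 2)) (fun i => ?_) ?_
      · have h1 := sq_nonneg (K i - K (i+Δ))
        simp only [hbdef]
        nlinarith
      · exact (hKsum.add ((summable_nat_add_iff Δ).mpr hKsum)).mul_left _
    set B := σ ^ 2 / (1 - β ^ 2 * ∑' n : ℕ, K n ^ 2) with hBdef
    have hBpos : 0 ≤ B := by
      have := hbd 1 le_rfl
      have := hm0 1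
      linarith
    have hconv : Tendsto (fun n => ∑ i ∈ Finset.range n,
        b i * ∫ ω, (V (n-i) ω)^2 ∂μ) atTop (nhds (B * ∑' i, b i)) :=
      aux_conv_tendsto hb hbsum hBpos htm
        (fun n hn => by rw [abs_of_nonneg (hm0 n)]; exact hbd n hn)
    have hcomp : Tendsto (fun n => ∑ i ∈ Finset.range (n-1),
        b i * ∫ ω, (V (n-1-i) ω)^2 ∂μ) atTop (nhds (B * ∑' i, b i)) :=
      hconv.comp (tendsto_sub_atTop_nat 1)
    have heq : (fun n => (∫ ω, V n ω * V (n + Δ) ω ∂μ) -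
          (∫ ω, V n ω ∂μ) * ∫ ω, V (n + Δ) ω ∂μ)
        =ᶠ[atTop] (fun n => ∑ i ∈ Finset.range (n-1),
          b i * ∫ ω, (V (n-1-i) ω)^2 ∂μ) := by
      filter_upwards [eventually_ge_atTop 2] with n hn
      have h1 : n - 1 + 1 = n := by omega
      have h := hrecD (n-1) (by omega) Δ
      rw [h1] at h
      have hb1 : ∀ i, b i * ∫ ω, (V (n-1-i) ω)^2 ∂μ
          = (β^2 * (K i * K (i+Δ))) * ∫ ω, (V (n-1-i) ω)^2 ∂μ := fun i => rfl
      rw [h, hmean n (by omega), hmean (n+Δ) (by omega)]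
      simp only [hbdef]
      ring
    have hlim : B * ∑' i, b i
        = β ^ 2 * B * ∑' j : ℕ, K j * K (j + Δ) := by
      have : ∑' i, b i = β^2 * ∑' j : ℕ, K j * K (j + Δ) := tsum_mul_left
      rw [this]; ring
    rw [hBdef] at hlim
    refine Tendsto.congr' heq.symm ?_
    rw [← hlim]
    exact hcomp
  refine ⟨⟨fun hA => ?_, fun hB => ?_⟩, himpl⟩
  · obtain ⟨_, htm, hcov⟩ := himpl hA
    refine ⟨⟨σ, ?_⟩, fun Δ => ⟨_, hcov Δ⟩⟩
    refine Tendsto.congr' ?_ (tendsto_const_nhds (x := σ))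
    filter_upwards [eventually_ge_atTop 1] with n hn
    exact (hmean n hn).symm
  · obtain ⟨_, hcov⟩ := hB
    obtain ⟨g, hg0⟩ := hcov 0
    have htm : Tendsto (fun n => ∫ ω, (V n ω)^2 ∂μ) atTop (nhds (g + σ^2)) := by
      refine Tendsto.congr' ?_ (hg0.add (tendsto_const_nhds (x := σ^2)))
      filter_upwards [eventually_ge_atTop 1] with n hn
      have h1 : ∫ ω, V n ω * V (n + 0) ω ∂μ = ∫ ω, (V n ω)^2 ∂μ := by
        congr 1
        funext ω
        rw [Nat.add_zero, pow_two]
      rw [h1, hmean n hn]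
      have h2 : n + 0 = n := rfl
      rw [h2, hmean n hn]
      ring
    have hdb := det_backward (a := fun i => β^2 * K i ^ 2) (c := σ^2)
      (by positivity) (fun i => mul_nonneg (sq_nonneg β) (sq_nonneg _))
      (m := fun k => ∫ ω, (V k ω)^2 ∂μ) hm0 hm1 hmge hrec0 htm
    obtain ⟨hasum, has1⟩ := hdb
    have hβ2 : (β^2 : ℝ) ≠ 0 := pow_ne_zero 2 hβ
    constructor
    · exact (summable_mul_left_iff hβ2).mp hasum
    · have : ∑' i, β^2 * K i ^ 2 = β^2 * ∑' n, K n ^ 2 := tsum_mul_left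
      rw [← this]
      exact has1
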